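/- Let 0 < α < 1. There exists a bounded continuous function u : [0,∞) → ℝ with u(0) = 0, locally Lipschitz on (0,∞), such that for every t > 0 the integral ∫_0^t (u(t) − u(s)) (t − s)^{−1−α} ds converges and ∫_0^t (u(t) − u(s)) (t − s)^{−1−α} ds + (u(t) − u(0)) t^{−α}/α ≥ 0 (i.e., the Caputo-type derivative of order α of u is nonnegative for all t > 0), and yet liminf_{t→∞} u(t) < limsup_{t→∞} u(t); in particular u has no limit as t → ∞. -/

import Mathlib

open MeasureTheory Filter

noncomputable def caputoU (c : ℝ) (t : ℝ) : ℝ :=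
  min t 1 + (1/8) * Real.sin (c * Real.log (max t 1))

lemma caputo_sin_lip (a b : ℝ) : |Real.sin a - Real.sin b| ≤ |a - b| := by
  rw [Real.sin_sub_sin]
  have h1 : |Real.sin ((a - b)/2)| ≤ |(a - b)/2| := Real.abs_sin_le_abs
  have h2 : |Real.cos ((a + b)/2)| ≤ 1 := Real.abs_cos_le_one _
  have h3 : |(a-b)/2| = |a-b|/2 := by rw [abs_div]; norm_num
  calc |2 * Real.sin ((a-b)/2) * Real.cos ((a+b)/2)|
      = 2 * |Real.sin ((a-b)/2)| * |Real.cos ((a+b)/2)| := by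
        rw [abs_mul, abs_mul, abs_two]
    _ ≤ 2 * |(a-b)/2| * 1 :=
        mul_le_mul (mul_le_mul_of_nonneg_left h1 (by norm_num)) h2 (abs_nonneg _)
          (by positivity)
    _ = |a - b| := by rw [h3]; ring

lemma caputo_logmax_mono {s t : ℝ} (h : s ≤ t) :
    Real.log (max s 1) ≤ Real.log (max t 1) :=
  Real.log_le_log (by positivity) (max_le_max h le_rfl)

lemma caputo_logmax_sub_le {s t : ℝ} (h : s ≤ t) :
    Real.log (max t 1) - Real.log (max s 1) ≤ (t - s) / max s 1 := by
  have hb : (1:ℝ) ≤ max s 1 := le_max_right _ _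
  have hb0 : (0:ℝ) < max s 1 := by linarith
  have hab : max s 1 ≤ max t 1 := max_le_max h le_rfl
  have ha0 : (0:ℝ) < max t 1 := lt_of_lt_of_le hb0 hab
  have hdiff : max t 1 - max s 1 ≤ t - s := by
    have := abs_max_sub_max_le_abs t s 1
    rw [abs_of_nonneg (by linarith : (0:ℝ) ≤ max t 1 - max s 1),
        abs_of_nonneg (by linarith : (0:ℝ) ≤ t - s)] at this
    exact this
  have hlog : Real.log (max t 1) - Real.log (max s 1) ≤ max t 1 / max s 1 - 1 := by
    rw [← Real.log_div (ne_of_gt ha0) (ne_of_gt hb0)]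
    exact Real.log_le_sub_one_of_pos (by positivity)
  calc Real.log (max t 1) - Real.log (max s 1) ≤ max t 1 / max s 1 - 1 := hlog
    _ = (max t 1 - max s 1) / max s 1 := by field_simp
    _ ≤ (t - s) / max s 1 := by gcongr

/-- key lower bound on increments -/
lemma caputoU_diff_ge {c s t : ℝ} (hc : 0 ≤ c) (h : s ≤ t) :
    caputoU c t - caputoU c s ≥ -(c/8) * ((t - s) / max s 1) := by
  have hmin : min s 1 ≤ min t 1 := min_le_min h le_rfl
  have hb : (1:ℝ) ≤ max s 1 := le_max_right _ _
  set A := c * Real.log (max t 1)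
  set B := c * Real.log (max s 1)
  have hAB : |A - B| ≤ c * ((t - s) / max s 1) := by
    have h1 : A - B = c * (Real.log (max t 1) - Real.log (max s 1)) := by ring
    have h2 : 0 ≤ Real.log (max t 1) - Real.log (max s 1) := by
      have := caputo_logmax_mono h; linarith
    rw [h1, abs_of_nonneg (by positivity)]
    exact mul_le_mul_of_nonneg_left (caputo_logmax_sub_le h) hc
  have hsin : |Real.sin A - Real.sin B| ≤ c * ((t - s) / max s 1) :=
    le_trans (caputo_sin_lip A B) (le_trans (le_abs_self _) ?_)
  · have : Real.sin A - Real.sin B ≥ -(c * ((t - s) / max s 1)) := by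
      have := abs_le.1 hsin; linarith [this.1]
    simp only [caputoU]
    nlinarith
  · rw [abs_abs]; exact hAB

lemma caputoU_diff_ge' {c s t : ℝ} (h : s ≤ t) :
    caputoU c t - caputoU c s ≥ -(1/4) := by
  have hmin : min s 1 ≤ min t 1 := min_le_min h le_rfl
  have h1 : |Real.sin (c * Real.log (max t 1))| ≤ 1 := Real.abs_sin_le_one _
  have h2 : |Real.sin (c * Real.log (max s 1))| ≤ 1 := Real.abs_sin_le_one _
  rw [abs_le] at h1 h2
  simp only [caputoU]
  nlinarith

lemma caputo_min_lip (x y : ℝ) : |min x 1 - min y 1| ≤ |x - y| := by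
  rcases le_total x 1 with h1 | h1 <;> rcases le_total y 1 with h2 | h2 <;>
    simp [min_eq_left, min_eq_right, h1, h2] <;> rw [abs_le] <;>
    constructor <;> rcases abs_le.1 (le_refl |x - y|) with ⟨ha, hb⟩ <;>
    [skip; skip; skip; skip] <;> nlinarith [le_abs_self (x - y), neg_abs_le (x - y)]

lemma caputoU_lip {c : ℝ} (hc0 : 0 ≤ c) (hc1 : c ≤ 1) (x y : ℝ) :
    |caputoU c x - caputoU c y| ≤ 2 * |x - y| := by
  have hmin := caputo_min_lip x y
  have hlog : |Real.log (max x 1) - Real.log (max y 1)| ≤ |x - y| := by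
    rcases le_total y x with h | h
    · have h0 := caputo_logmax_mono h
      rw [abs_of_nonneg (by linarith)]
      calc Real.log (max x 1) - Real.log (max y 1) ≤ (x - y) / max y 1 :=
            caputo_logmax_sub_le h
        _ ≤ x - y := div_le_self (by linarith) (le_max_right _ _)
        _ ≤ |x - y| := le_abs_self _
    · have h0 := caputo_logmax_mono h
      rw [abs_sub_comm, abs_of_nonneg (by linarith), abs_sub_comm]
      calc Real.log (max y 1) - Real.log (max x 1) ≤ (y - x) / max x 1 :=
            caputo_logmax_sub_le h
        _ ≤ y - x := div_le_self (by linarith) (le_max_right _ _)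
        _ ≤ |y - x| := le_abs_self _
  have hsin : |Real.sin (c * Real.log (max x 1)) - Real.sin (c * Real.log (max y 1))|
      ≤ c * |x - y| := by
    refine le_trans (caputo_sin_lip _ _) ?_
    have : c * Real.log (max x 1) - c * Real.log (max y 1)
        = c * (Real.log (max x 1) - Real.log (max y 1)) := by ring
    rw [this, abs_mul, abs_of_nonneg hc0]
    exact mul_le_mul_of_nonneg_left hlog hc0
  simp only [caputoU]
  have : min x 1 + 1/8 * Real.sin (c * Real.log (max x 1))
      - (min y 1 + 1/8 * Real.sin (c * Real.log (max y 1)))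
      = (min x 1 - min y 1) + (1/8) * (Real.sin (c * Real.log (max x 1))
        - Real.sin (c * Real.log (max y 1))) := by ring
  rw [this]
  calc |(min x 1 - min y 1) + (1/8) * (Real.sin (c * Real.log (max x 1))
        - Real.sin (c * Real.log (max y 1)))|
      ≤ |min x 1 - min y 1| + |(1/8) * (Real.sin (c * Real.log (max x 1))
        - Real.sin (c * Real.log (max y 1)))| := abs_add_le _ _
    _ ≤ |x - y| + (1/8) * (c * |x - y|) := by
        rw [abs_mul]
        have : |(1:ℝ)/8| = 1/8 := by norm_num
        rw [this]
        exact add_le_add hmin (by nlinarith [abs_nonneg (x - y)])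
    _ ≤ 2 * |x - y| := by nlinarith [abs_nonneg (x - y)]

lemma caputoU_continuous (c : ℝ) : Continuous (caputoU c) := by
  apply Continuous.add (continuous_id.min continuous_const)
  apply continuous_const.mul
  apply Real.continuous_sin.comp
  apply continuous_const.mul
  exact Real.continuousOn_log.comp_continuous (continuous_id.max continuous_const)
    (fun x => by
      simp only [Set.mem_compl_iff, Set.mem_singleton_iff]
      have : (1:ℝ) ≤ max x 1 := le_max_right _ _
      intro h; rw [h] at this; linarith)

lemma caputoU_zero (c : ℝ) : caputoU c 0 = 0 := by
  simp [caputoU]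

lemma caputoU_le (c t : ℝ) : caputoU c t ≤ 9/8 := by
  have h1 : min t 1 ≤ 1 := min_le_right _ _
  have h2 := (abs_le.1 (Real.abs_sin_le_one (c * Real.log (max t 1)))).2
  simp only [caputoU]; nlinarith

lemma caputoU_ge {c t : ℝ} (ht : 0 ≤ t) : -(1/8) ≤ caputoU c t := by
  have h1 : 0 ≤ min t 1 := le_min ht zero_le_one
  have h2 := (abs_le.1 (Real.abs_sin_le_one (c * Real.log (max t 1)))).1
  simp only [caputoU]; nlinarith

lemma caputoU_ge_one {c t : ℝ} (ht : 1 ≤ t) : 7/8 ≤ caputoU c t := by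
  have h1 : min t 1 = 1 := min_eq_right ht
  have h2 := (abs_le.1 (Real.abs_sin_le_one (c * Real.log (max t 1)))).1
  simp only [caputoU]; nlinarith

lemma caputoU_small {c t : ℝ} (ht0 : 0 ≤ t) (ht1 : t ≤ 1) : caputoU c t = t := by
  have h1 : min t 1 = t := min_eq_left ht1
  have h2 : max t 1 = 1 := max_eq_right ht1
  simp [caputoU, h1, h2]

lemma caputo_measurable_rpow (p : ℝ) : Measurable (fun x : ℝ => x ^ p) :=
  measurable_of_continuousOn_compl_singleton 0
    (continuousOn_id.rpow_const (fun x hx => Or.inl hx))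

lemma caputo_mul_rpow {y α : ℝ} (hy : 0 ≤ y) (hα : 0 < α) :
    y * y ^ (-1 - α) = y ^ (-α) := by
  rcases eq_or_lt_of_le hy with h | h
  · rw [← h, Real.zero_rpow (by intro h'; nlinarith), mul_zero,
      Real.zero_rpow (by intro h'; nlinarith)]
  · nth_rewrite 1 [← Real.rpow_one y]
    rw [← Real.rpow_add h, show (1:ℝ) + (-1 - α) = -α by ring]

lemma caputo_int1 {α t : ℝ} (hα0 : 0 < α) (ht : 0 < t) :
    ∫ s in (0:ℝ)..(t/2), (t - s) ^ (-1 - α) = ((t/2) ^ (-α) - t ^ (-α)) / α := by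
  have h := intervalIntegral.integral_comp_sub_left (a := 0) (b := t/2)
    (fun x : ℝ => x ^ (-1 - α)) t
  rw [show t - t/2 = t/2 by ring, sub_zero] at h
  rw [h, integral_rpow (Or.inr ⟨by intro hh; nlinarith, by
    rw [Set.uIcc_of_le (by linarith)]
    intro hh
    exact absurd hh.1 (by simp; positivity)⟩)]
  rw [show (-1 - α + 1) = -α by ring]
  rw [div_eq_div_iff (by intro hh; nlinarith) (ne_of_gt hα0)]
  ring

lemma caputo_int2 {α t : ℝ} (hα1 : α < 1) (ht : 0 < t) :
    ∫ s in (t/2)..t, (t - s) ^ (-α) = (t/2) ^ (1-α) / (1-α) := by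
  have h := intervalIntegral.integral_comp_sub_left (a := t/2) (b := t)
    (fun x : ℝ => x ^ (-α)) t
  rw [show t - t/2 = t/2 by ring, sub_self] at h
  rw [h, integral_rpow (Or.inl (by linarith)),
    show (-α + 1) = 1 - α by ring,
    Real.zero_rpow (by intro hh; nlinarith)]
  ring

lemma caputo_integrable1 {α c t : ℝ} (hα0 : 0 < α) (ht : 0 < t) :
    IntervalIntegrable (fun s => (caputoU c t - caputoU c s) * (t - s) ^ (-1 - α))
      volume 0 (t/2) := by
  apply ContinuousOn.intervalIntegrable
  apply ContinuousOn.mul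
  · exact (continuous_const.sub (caputoU_continuous c)).continuousOn
  · apply ContinuousOn.rpow_const ((continuous_const.sub continuous_id).continuousOn)
    intro x hx
    rw [Set.uIcc_of_le (by linarith : (0:ℝ) ≤ t/2)] at hx
    left
    have := hx.2
    simp only [Pi.sub_apply, id]
    intro hh
    nlinarith

lemma caputo_rpow_integrable {α t : ℝ} (hα1 : α < 1) (ht : 0 < t) :
    IntervalIntegrable (fun s => (t - s) ^ (-α)) volume (t/2) t := by
  have h := (intervalIntegral.intervalIntegrable_rpow' (a := t/2) (b := 0)
    (show (-1:ℝ) < -α by linarith)).comp_sub_left t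
  rw [show t - t/2 = t/2 by ring, sub_zero] at h
  exact h

lemma caputo_integrable2 {α c t : ℝ} (hα0 : 0 < α) (hα1 : α < 1)
    (hc0 : 0 ≤ c) (hc1 : c ≤ 1) (ht : 0 < t) :
    IntervalIntegrable (fun s => (caputoU c t - caputoU c s) * (t - s) ^ (-1 - α))
      volume (t/2) t := by
  apply IntervalIntegrable.mono_fun ((caputo_rpow_integrable hα1 ht).const_mul 2)
  · exact ((measurable_const.sub (caputoU_continuous c).measurable).mul
      ((caputo_measurable_rpow (-1-α)).comp (measurable_const.sub measurable_id))).aestronglyMeasurable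
  · filter_upwards [MeasureTheory.ae_restrict_mem measurableSet_uIoc] with s hs
    rw [Set.uIoc_of_le (by linarith : t/2 ≤ t)] at hs
    have hst : s ≤ t := hs.2
    have h1 : (0:ℝ) ≤ t - s := by linarith
    simp only [Real.norm_eq_abs, abs_mul]
    have h2 : |(t - s) ^ (-1 - α)| = (t - s) ^ (-1 - α) :=
      abs_of_nonneg (Real.rpow_nonneg h1 _)
    have h3 : |(t - s) ^ (-α)| = (t - s) ^ (-α) :=
      abs_of_nonneg (Real.rpow_nonneg h1 _)
    rw [h2, h3]
    have h4 : |caputoU c t - caputoU c s| ≤ 2 * (t - s) := by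
      have := caputoU_lip hc0 hc1 t s
      rw [abs_of_nonneg h1] at this
      exact this
    calc |caputoU c t - caputoU c s| * (t - s) ^ (-1 - α)
        ≤ (2 * (t - s)) * (t - s) ^ (-1 - α) :=
          mul_le_mul_of_nonneg_right h4 (Real.rpow_nonneg h1 _)
      _ = 2 * ((t - s) * (t - s) ^ (-1 - α)) := by ring
      _ = 2 * (t - s) ^ (-α) := by rw [caputo_mul_rpow h1 hα0]
      _ ≤ |2| * (t - s) ^ (-α) := by rw [abs_two]

lemma caputo_kernel_integrable1 {α t : ℝ} (hα0 : 0 < α) (ht : 0 < t) :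
    IntervalIntegrable (fun s => (t - s) ^ (-1 - α)) volume 0 (t/2) := by
  apply ContinuousOn.intervalIntegrable
  apply ContinuousOn.rpow_const ((continuous_const.sub continuous_id).continuousOn)
  intro x hx
  rw [Set.uIcc_of_le (by linarith : (0:ℝ) ≤ t/2)] at hx
  left
  have := hx.2
  simp only [Pi.sub_apply, id]
  intro hh
  nlinarith

lemma caputo_pow_half_le {α t : ℝ} (hα0 : 0 < α) (hα1 : α < 1) (ht : 0 < t) :
    (t/2) ^ (-α) ≤ 2 * t ^ (-α) := by
  have h1 : (t/2 : ℝ) = t * (2:ℝ)⁻¹ := by ring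
  rw [h1, Real.mul_rpow (le_of_lt ht) (by norm_num), Real.inv_rpow (by norm_num)]
  have h2 : (2:ℝ) ^ (-1:ℝ) ≤ (2:ℝ) ^ (-α) :=
    Real.rpow_le_rpow_of_exponent_le one_le_two (by linarith)
  have h3 : (2:ℝ) ^ (-1:ℝ) = 1/2 := by
    rw [Real.rpow_neg_one]; norm_num
  have h4 : (0:ℝ) < (2:ℝ) ^ (-α) := Real.rpow_pos_of_pos (by norm_num) _
  have h5 : ((2:ℝ) ^ (-α))⁻¹ ≤ 2 := by
    rw [h3] at h2
    have := inv_anti₀ (by norm_num : (0:ℝ) < 1/2) h2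
    simpa using this
  have h6 : (0:ℝ) ≤ t ^ (-α) := Real.rpow_nonneg (le_of_lt ht) _
  calc t ^ (-α) * ((2:ℝ) ^ (-α))⁻¹ ≤ t ^ (-α) * 2 :=
        mul_le_mul_of_nonneg_left h5 h6
    _ = 2 * t ^ (-α) := by ring

set_option maxHeartbeats 1000000 in
lemma caputo_main {α t : ℝ} (hα0 : 0 < α) (hα1 : α < 1) (ht : 1 < t) :
    0 ≤ (∫ s in (0:ℝ)..t,
          (caputoU ((1-α)/2) t - caputoU ((1-α)/2) s) * (t - s) ^ (-1 - α))
        + (caputoU ((1-α)/2) t - caputoU ((1-α)/2) 0) * t ^ (-α) / α := by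
  set c : ℝ := (1-α)/2 with hc
  have hc0 : 0 ≤ c := by rw [hc]; linarith
  have hc1 : c ≤ 1 := by rw [hc]; linarith
  have ht0 : 0 < t := by linarith
  have hP : (0:ℝ) < t ^ (-α) := Real.rpow_pos_of_pos ht0 _
  have hiα : (0:ℝ) < α⁻¹ := inv_pos.mpr hα0
  have hiα1 : (1:ℝ) ≤ α⁻¹ := by simpa using inv_anti₀ hα0 hα1.le
  have h1 := caputo_integrable1 (c := c) (α := α) hα0 ht0
  have h2 := caputo_integrable2 (c := c) hα0 hα1 hc0 hc1 ht0
  have hsplit := intervalIntegral.integral_add_adjacent_intervals h1 h2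
  -- first piece
  have E1 : ∫ s in (0:ℝ)..(t/2), (-(1/4)) * (t - s) ^ (-1 - α)
      ≤ ∫ s in (0:ℝ)..(t/2), (caputoU c t - caputoU c s) * (t - s) ^ (-1 - α) := by
    apply intervalIntegral.integral_mono_on (by linarith)
      ((caputo_kernel_integrable1 hα0 ht0).const_mul _) h1
    intro x hx
    have hxt : x ≤ t := by have := hx.2; linarith
    have hK : (0:ℝ) ≤ (t - x) ^ (-1 - α) := Real.rpow_nonneg (by linarith) _
    exact mul_le_mul_of_nonneg_right (caputoU_diff_ge' hxt) hK
  have V1 : ∫ s in (0:ℝ)..(t/2), (-(1/4)) * (t - s) ^ (-1 - α)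
      = (-(1/4)) * (((t/2) ^ (-α) - t ^ (-α)) / α) := by
    rw [intervalIntegral.integral_const_mul, caputo_int1 hα0 ht0]
  have B1 : -(1/2) * t ^ (-α) * α⁻¹
      ≤ ∫ s in (0:ℝ)..(t/2), (caputoU c t - caputoU c s) * (t - s) ^ (-1 - α) := by
    refine le_trans ?_ E1
    rw [V1]
    have hh := caputo_pow_half_le hα0 hα1 ht0
    have key : -(1/2) * t ^ (-α) ≤ -(1/4) * ((t/2) ^ (-α) - t ^ (-α)) := by nlinarith
    calc -(1/2) * t ^ (-α) * α⁻¹ = (-(1/2) * t ^ (-α)) / α := by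
          rw [div_eq_mul_inv]; ring
      _ ≤ (-(1/4) * ((t/2) ^ (-α) - t ^ (-α))) / α := by gcongr
      _ = (-(1/4)) * (((t/2) ^ (-α) - t ^ (-α)) / α) := by ring
  -- second piece
  have E2 : ∫ s in (t/2)..t, (-(c/(4*t))) * (t - s) ^ (-α)
      ≤ ∫ s in (t/2)..t, (caputoU c t - caputoU c s) * (t - s) ^ (-1 - α) := by
    apply intervalIntegral.integral_mono_on (by linarith)
      ((caputo_rpow_integrable hα1 ht0).const_mul _) h2
    intro x hx
    have hx1 : t/2 ≤ x := hx.1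
    have hxt : x ≤ t := hx.2
    have hK : (0:ℝ) ≤ (t - x) ^ (-1 - α) := Real.rpow_nonneg (by linarith) _
    have hd : caputoU c t - caputoU c x ≥ -(c/8) * ((t - x) / max x 1) :=
      caputoU_diff_ge hc0 hxt
    have hmax : t/2 ≤ max x 1 := le_trans hx1 (le_max_left _ _)
    have hmax0 : (0:ℝ) < max x 1 := by linarith
    have hfrac : (t - x) / max x 1 ≤ (t - x) / (t/2) := by
      gcongr <;> linarith
    have hd2 : caputoU c t - caputoU c x ≥ -(c/(4*t)) * (t - x) := by
      have e : -(c/8) * ((t - x) / (t/2)) = -(c/(4*t)) * (t - x) := by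
        field_simp; ring
      have h9 : 0 ≤ (c/8) * ((t - x)/(t/2) - (t - x)/max x 1) :=
        mul_nonneg (by linarith) (by linarith)
      nlinarith [hd, e.le, e.ge]
    calc (-(c/(4*t))) * (t - x) ^ (-α)
        = (-(c/(4*t)) * (t - x)) * (t - x) ^ (-1 - α) := by
          rw [mul_assoc, caputo_mul_rpow (by linarith) hα0]
      _ ≤ (caputoU c t - caputoU c x) * (t - x) ^ (-1 - α) :=
          mul_le_mul_of_nonneg_right hd2 hK
  have V2 : ∫ s in (t/2)..t, (-(c/(4*t))) * (t - s) ^ (-α)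
      = (-(c/(4*t))) * ((t/2) ^ (1-α) / (1-α)) := by
    rw [intervalIntegral.integral_const_mul, caputo_int2 hα1 ht0]
  have B2 : -(1/8) * t ^ (-α)
      ≤ ∫ s in (t/2)..t, (caputoU c t - caputoU c s) * (t - s) ^ (-1 - α) := by
    refine le_trans ?_ E2
    rw [V2]
    have F2 : (t/2) ^ (1-α) ≤ t * t ^ (-α) := by
      have h2b : (t/2) ^ (1-α) ≤ t ^ (1-α) :=
        Real.rpow_le_rpow (by positivity) (by linarith) (by linarith)
      have h2c : t ^ ((1:ℝ)-α) = t * t ^ (-α) := by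
        rw [show (1:ℝ) - α = 1 + (-α) by ring, Real.rpow_add ht0, Real.rpow_one]
      linarith [h2b, h2c.le, h2c.ge]
    have e : (-(c/(4*t))) * ((t/2) ^ (1-α) / (1-α)) = -((t/2) ^ (1-α)) / (8*t) := by
      rw [hc]
      have hne : (1:ℝ) - α ≠ 0 := by intro hh; nlinarith
      field_simp
      ring
    rw [e]
    calc -(1/8) * t ^ (-α) = -(t * t ^ (-α)) / (8*t) := by
          field_simp
      _ ≤ -((t/2) ^ (1-α)) / (8*t) := by
          gcongr <;> linarith [F2]
  -- the zero-order term
  have hu0 : caputoU c 0 = 0 := caputoU_zero c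
  have hut : 7/8 ≤ caputoU c t := caputoU_ge_one (le_of_lt ht)
  have hterm : (7/8) * t ^ (-α) * α⁻¹ ≤ (caputoU c t - caputoU c 0) * t ^ (-α) / α := by
    rw [hu0, sub_zero, div_eq_mul_inv]
    have : (7/8) * t ^ (-α) ≤ caputoU c t * t ^ (-α) :=
      mul_le_mul_of_nonneg_right hut (le_of_lt hP)
    exact mul_le_mul_of_nonneg_right this (le_of_lt hiα)
  have hcmp : -(1/8) * t ^ (-α) * α⁻¹ ≤ -(1/8) * t ^ (-α) := by
    nlinarith [mul_nonneg (le_of_lt hP) (by linarith : (0:ℝ) ≤ α⁻¹ - 1)]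
  rw [← hsplit]
  linarith [B1, B2, hterm, hcmp, mul_nonneg (le_of_lt hP) (le_of_lt hiα)]

lemma caputoU_freq_hi {c : ℝ} (hc : 0 < c) : ∃ᶠ x in atTop, caputoU c x = 9/8 := by
  rw [Filter.frequently_atTop]
  intro N
  set n : ℕ := ⌈c * Real.log N⌉₊ with hn
  have hpi := Real.pi_gt_three
  have harg : 0 ≤ (Real.pi/2 + n*(2*Real.pi))/c := by positivity
  refine ⟨Real.exp ((Real.pi/2 + n*(2*Real.pi))/c), ?_, ?_⟩
  · have hx1 : (1:ℝ) ≤ Real.exp ((Real.pi/2 + n*(2*Real.pi))/c) := Real.one_le_exp harg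
    rcases le_or_gt N 1 with hN | hN
    · linarith
    · have hlogN : c * Real.log N ≤ n := Nat.le_ceil _
      have h2 : Real.log N ≤ (Real.pi/2 + n*(2*Real.pi))/c := by
        rw [le_div_iff₀ hc]
        nlinarith [(Nat.cast_nonneg n : (0:ℝ) ≤ n)]
      calc N = Real.exp (Real.log N) := (Real.exp_log (by linarith)).symm
        _ ≤ _ := Real.exp_le_exp.mpr h2
  · set x := Real.exp ((Real.pi/2 + n*(2*Real.pi))/c) with hx
    have hx1 : (1:ℝ) ≤ x := Real.one_le_exp harg
    have hmax : max x 1 = x := max_eq_left hx1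
    have hmin : min x 1 = 1 := min_eq_right hx1
    have hlog : Real.log x = (Real.pi/2 + n*(2*Real.pi))/c := Real.log_exp _
    simp only [caputoU, hmax, hmin, hlog]
    rw [mul_div_cancel₀ _ (ne_of_gt hc), Real.sin_add_nat_mul_two_pi,
      Real.sin_pi_div_two]
    norm_num

lemma caputoU_freq_lo {c : ℝ} (hc : 0 < c) : ∃ᶠ x in atTop, caputoU c x = 7/8 := by
  rw [Filter.frequently_atTop]
  intro N
  set n : ℕ := ⌈c * Real.log N⌉₊ with hn
  have hpi := Real.pi_gt_three
  have harg : 0 ≤ (-(Real.pi/2) + (n+1 : ℕ)*(2*Real.pi))/c := by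
    apply div_nonneg _ (le_of_lt hc)
    push_cast
    nlinarith [(Nat.cast_nonneg n : (0:ℝ) ≤ n)]
  refine ⟨Real.exp ((-(Real.pi/2) + (n+1 : ℕ)*(2*Real.pi))/c), ?_, ?_⟩
  · have hx1 : (1:ℝ) ≤ Real.exp _ := Real.one_le_exp harg
    rcases le_or_gt N 1 with hN | hN
    · linarith
    · have hlogN : c * Real.log N ≤ n := Nat.le_ceil _
      have h2 : Real.log N ≤ (-(Real.pi/2) + (n+1 : ℕ)*(2*Real.pi))/c := by
        rw [le_div_iff₀ hc]
        push_cast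
        nlinarith [(Nat.cast_nonneg n : (0:ℝ) ≤ n)]
      calc N = Real.exp (Real.log N) := (Real.exp_log (by linarith)).symm
        _ ≤ _ := Real.exp_le_exp.mpr h2
  · set x := Real.exp ((-(Real.pi/2) + (n+1 : ℕ)*(2*Real.pi))/c) with hx
    have hx1 : (1:ℝ) ≤ x := Real.one_le_exp harg
    have hmax : max x 1 = x := max_eq_left hx1
    have hmin : min x 1 = 1 := min_eq_right hx1
    have hlog : Real.log x = (-(Real.pi/2) + (n+1 : ℕ)*(2*Real.pi))/c := Real.log_exp _
    simp only [caputoU, hmax, hmin, hlog]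
    rw [mul_div_cancel₀ _ (ne_of_gt hc), Real.sin_add_nat_mul_two_pi,
      Real.sin_neg, Real.sin_pi_div_two]
    norm_num

lemma caputoU_bddAbove (c : ℝ) : IsBoundedUnder (· ≤ ·) atTop (caputoU c) :=
  isBoundedUnder_of_eventually_le (a := 9/8) (Filter.Eventually.of_forall fun x => caputoU_le c x)

lemma caputoU_bddBelow (c : ℝ) : IsBoundedUnder (· ≥ ·) atTop (caputoU c) :=
  isBoundedUnder_of_eventually_ge (a := -(1/8))
    (Filter.eventually_atTop.mpr ⟨0, fun x hx => caputoU_ge hx⟩)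

lemma caputoU_liminf_lt_limsup {c : ℝ} (hc : 0 < c) :
    liminf (caputoU c) atTop < limsup (caputoU c) atTop := by
  have h1 : liminf (caputoU c) atTop ≤ 7/8 :=
    liminf_le_of_frequently_le ((caputoU_freq_lo hc).mono fun x hx => le_of_eq hx)
      (caputoU_bddBelow c)
  have h2 : (9:ℝ)/8 ≤ limsup (caputoU c) atTop :=
    le_limsup_of_frequently_le ((caputoU_freq_hi hc).mono fun x hx => ge_of_eq hx)
      (caputoU_bddAbove c)
  linarith

/-- For `0 < α < 1` there is a bounded continuous function `u` on `[0,∞)`,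
with `u 0 = 0`, locally Lipschitz on `(0,∞)`, whose Caputo-type derivative of order `α`
is nonnegative for all `t > 0`, and yet `liminf u < limsup u` at infinity; in particular
`u` has no limit at infinity. -/
theorem stmt_0 (α : ℝ) (hα0 : 0 < α) (hα1 : α < 1) :
    ∃ u : ℝ → ℝ,
      (∃ M : ℝ, ∀ t, 0 ≤ t → |u t| ≤ M) ∧
      ContinuousOn u (Set.Ici 0) ∧
      u 0 = 0 ∧
      (∀ x ∈ Set.Ioi (0:ℝ), ∃ L : NNReal, ∃ U ∈ nhdsWithin x (Set.Ioi (0:ℝ)),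
        LipschitzOnWith L u U) ∧
      (∀ t, 0 < t →
        IntervalIntegrable (fun s => (u t - u s) * (t - s) ^ (-1 - α)) volume 0 t ∧
        0 ≤ (∫ s in (0:ℝ)..t, (u t - u s) * (t - s) ^ (-1 - α))
              + (u t - u 0) * t ^ (-α) / α) ∧
      liminf u atTop < limsup u atTop ∧
      (∀ l : ℝ, ¬ Tendsto u atTop (nhds l)) := by
  set c : ℝ := (1-α)/2 with hcdef
  have hc : 0 < c := by rw [hcdef]; linarith
  have hc0 : 0 ≤ c := le_of_lt hc
  have hc1 : c ≤ 1 := by rw [hcdef]; linarith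
  refine ⟨caputoU c, ⟨2, fun t ht => ?_⟩, (caputoU_continuous c).continuousOn,
    caputoU_zero c, fun x _ => ⟨2, Set.univ, Filter.univ_mem, ?_⟩,
    fun t ht => ⟨(caputo_integrable1 hα0 ht).trans
      (caputo_integrable2 hα0 hα1 hc0 hc1 ht), ?_⟩,
    caputoU_liminf_lt_limsup hc, fun l hl => ?_⟩
  · -- boundedness
    have h1 := caputoU_le c t
    have h2 := caputoU_ge (c := c) ht
    rw [abs_le]
    constructor <;> linarith
  · -- Lipschitz
    apply LipschitzWith.lipschitzOnWith
    apply LipschitzWith.of_dist_le_mul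
    intro a b
    rw [Real.dist_eq, Real.dist_eq]
    have := caputoU_lip hc0 hc1 a b
    push_cast
    linarith
  · -- the Caputo inequality
    rcases le_or_gt t 1 with h | h
    · apply add_nonneg
      · apply intervalIntegral.integral_nonneg (le_of_lt ht)
        intro s hs
        have hs0 : 0 ≤ s := hs.1
        have hst : s ≤ t := hs.2
        have e1 : caputoU c t = t := caputoU_small (le_of_lt ht) h
        have e2 : caputoU c s = s := caputoU_small hs0 (by linarith)
        rw [e1, e2]
        exact mul_nonneg (by linarith) (Real.rpow_nonneg (by linarith) _)
      · rw [caputoU_zero, sub_zero, caputoU_small (le_of_lt ht) h]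
        have : (0:ℝ) ≤ t ^ (-α) := Real.rpow_nonneg (le_of_lt ht) _
        positivity
    · exact caputo_main hα0 hα1 h
  · -- no limit
    have h1 := hl.liminf_eq
    have h2 := hl.limsup_eq
    have := caputoU_liminf_lt_limsup hc
    rw [h1, h2] at this
    exact lt_irrefl l this
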